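/- If u_1, ..., u_s ∈ V are pairwise orthogonal vectors with each h(u_i,u_i) a unit of R, then they can be extended to an orthogonal basis of V with all lengths units of R. -/

import Mathlib

open MulOpposite

/-- A `*`-hermitian form on a right `A`-module `V` (right modules are encoded as
modules over the opposite ring `Aᵐᵒᵖ`): it is additive and `A`-linear in the second
variable and satisfies `h v u = (h u v)*`. -/
structure HermitianForm (A V : Type*) [Ring A] [StarRing A] [AddCommGroup V]
    [Module Aᵐᵒᵖ V] where
  toFun : V → V → A
  add_right : ∀ u v w : V, toFun u (v + w) = toFun u v + toFun u w
  smul_right : ∀ (a : A) (u v : V), toFun u (op a • v) = toFun u v * a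
  conj_symm : ∀ u v : V, toFun v u = star (toFun u v)

namespace HermitianForm

variable {A V : Type*} [Ring A] [StarRing A] [AddCommGroup V] [Module Aᵐᵒᵖ V]

/-- Non-degeneracy: the map `u ↦ h u -` is a bijection of `V` onto the dual module. -/
def Nondeg (h : HermitianForm A V) : Prop :=
  ∀ φ : V →ₗ[Aᵐᵒᵖ] A, ∃! u : V, ∀ v : V, h.toFun u v = φ v

end HermitianForm

/-- A vector of the free module `V` of rank `m` is primitive if it belongs to a basis. -/
def IsPrimitive (A : Type*) {V : Type*} [Ring A] [AddCommGroup V] [Module Aᵐᵒᵖ V]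
    (m : ℕ) (v : V) : Prop :=
  ∃ (b : Module.Basis (Fin m) Aᵐᵒᵖ V) (i : Fin m), b i = v

section auxlocal
variable {A : Type*} [Ring A] [IsLocalRing A]

lemma myUnitAdd {a b : A} (h : IsUnit (a + b)) : IsUnit a ∨ IsUnit b := by
  rcases h with ⟨u, hu⟩
  have h1 : (↑u⁻¹ : A) * a + ↑u⁻¹ * b = 1 := by rw [← mul_add, ← hu, Units.inv_mul]
  rcases IsLocalRing.isUnit_or_isUnit_of_add_one h1 with h2 | h2
  · left
    have h3 := u.isUnit.mul h2
    rwa [← mul_assoc, Units.mul_inv, one_mul] at h3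
  · right
    have h3 := u.isUnit.mul h2
    rwa [← mul_assoc, Units.mul_inv, one_mul] at h3

lemma unitOfLeftInv {x y : A} (h : y * x = 1) : IsUnit x := by
  have hor := myUnitAdd (a := x * y) (b := 1 - x * y) (by simp)
  rcases hor with he | he
  · rcases he with ⟨e, he⟩
    have hidem : (x * y) * (x * y) = x * y := by
      rw [mul_assoc, ← mul_assoc y, h, one_mul]
    have h2 : (↑e : A) * ↑e = ↑e := by rw [he]; exact hidem
    have h1 : x * y = 1 := by
      calc x * y = ↑e := he.symm
      _ = ↑e⁻¹ * (↑e * ↑e) := by rw [← mul_assoc, Units.inv_mul, one_mul]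
      _ = ↑e⁻¹ * ↑e := by rw [h2]
      _ = 1 := Units.inv_mul e
    exact ⟨⟨x, y, h1, h⟩, rfl⟩
  · exfalso
    rcases he with ⟨v, hv⟩
    have h0 : (↑v : A) * x = 0 := by
      rw [hv, sub_mul, one_mul, mul_assoc, h, mul_one, sub_self]
    have hx : x = 0 := by rw [← one_mul x, ← Units.inv_mul v, mul_assoc, h0, mul_zero]
    rw [hx, mul_zero] at h
    exact zero_ne_one h

lemma unitOfRightInv' {x y : A} (h : x * y = 1) : IsUnit x := by
  have hy := unitOfLeftInv h
  rcases hy with ⟨e, he⟩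
  have hx : x = ↑e⁻¹ := by
    rw [← mul_one x, ← Units.mul_inv e, ← mul_assoc, he, h, one_mul]
  exact hx ▸ (e⁻¹).isUnit

lemma unitOfMulRight {x c : A} (h : IsUnit (x * c)) : IsUnit x := by
  rcases h with ⟨e, he⟩
  have h1 : x * (c * ↑e⁻¹) = 1 := by rw [← mul_assoc, ← he, Units.mul_inv]
  exact unitOfRightInv' h1

lemma unitOfMulLeft {x c : A} (h : IsUnit (c * x)) : IsUnit x := by
  rcases h with ⟨e, he⟩
  have h1 : (↑e⁻¹ * c) * x = 1 := by rw [mul_assoc, ← he, Units.inv_mul]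
  exact unitOfLeftInv h1

lemma unit_add_one {x : A} (hx : ¬ IsUnit x) : IsUnit (x + 1) := by
  by_contra hc
  have he : x + 1 + -x = 1 := by abel
  rcases myUnitAdd (a := x + 1) (b := -x) (by rw [he]; exact isUnit_one) with h | h
  · exact hc h
  · exact hx (by simpa using h.neg)

lemma exists_unit_of_sum {ι : Type*} {s : Finset ι} {f : ι → A}
    (h : IsUnit (∑ i ∈ s, f i)) : ∃ i ∈ s, IsUnit (f i) := by
  classical
  induction s using Finset.induction_on with
  | empty => rw [Finset.sum_empty] at h; exact absurd h not_isUnit_zero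
  | insert _ _ hni ih =>
    rename_i a t
    rw [Finset.sum_insert hni] at h
    rcases myUnitAdd h with h1 | h1
    · exact ⟨a, Finset.mem_insert_self a t, h1⟩
    · rcases ih h1 with ⟨i, hi, hu⟩
      exact ⟨i, Finset.mem_insert_of_mem hi, hu⟩
end auxlocal

namespace HermitianForm

variable {A V : Type*} [Ring A] [StarRing A] [AddCommGroup V] [Module Aᵐᵒᵖ V]

/-- `h u -` as a linear map. -/
def lin (h : HermitianForm A V) (u : V) : V →ₗ[Aᵐᵒᵖ] A where
  toFun v := h.toFun u v
  map_add' v w := h.add_right u v w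
  map_smul' r v := by
    show h.toFun u (r • v) = r • h.toFun u v
    have := h.smul_right (unop r) u v
    rw [op_unop] at this
    rw [this, MulOpposite.smul_eq_mul_unop]

@[simp] lemma lin_apply (h : HermitianForm A V) (u v : V) : h.lin u v = h.toFun u v := rfl

lemma zero_right (h : HermitianForm A V) (u : V) : h.toFun u 0 = 0 := (h.lin u).map_zero

lemma zero_left (h : HermitianForm A V) (v : V) : h.toFun 0 v = 0 := by
  rw [h.conj_symm, zero_right, star_zero]

lemma add_left (h : HermitianForm A V) (u v w : V) :
    h.toFun (u + v) w = h.toFun u w + h.toFun v w := by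
  rw [h.conj_symm, h.add_right, star_add, ← h.conj_symm, ← h.conj_symm]

lemma smul_left (h : HermitianForm A V) (a : A) (u v : V) :
    h.toFun (op a • u) v = star a * h.toFun u v := by
  rw [h.conj_symm, h.smul_right, star_mul, ← h.conj_symm]

end HermitianForm

universe uu vv

lemma main_extension {A : Type uu} [Ring A] [StarRing A] [IsLocalRing A]
    (d : A) (hd : d + star d = 1) :
    ∀ (m : ℕ) {V : Type vv} [AddCommGroup V] [Module Aᵐᵒᵖ V]
      (b : Module.Basis (Fin m) Aᵐᵒᵖ V) (h : HermitianForm A V), h.Nondeg →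
      ∀ (s : ℕ) (u : Fin s → V),
      (∀ i j : Fin s, i ≠ j → h.toFun (u i) (u j) = 0) →
      (∀ i : Fin s, IsUnit (h.toFun (u i) (u i))) →
      ∃ (hs : s ≤ m) (w : Module.Basis (Fin m) Aᵐᵒᵖ V),
        (∀ i j : Fin m, i ≠ j → h.toFun (w i) (w j) = 0) ∧
        (∀ i : Fin m, IsUnit (h.toFun (w i) (w i))) ∧
        (∀ i : Fin s, w (Fin.castLE hs i) = u i) := by
  intro m
  induction m with
  | zero =>
    intro V _ _ b h hnd s u horth hunit
    haveI : Subsingleton V := b.repr.toEquiv.subsingleton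
    rcases s with _ | s'
    · exact ⟨le_refl 0, b, fun i j _ => i.elim0, fun i => i.elim0, fun i => i.elim0⟩
    · exfalso
      have h1 := hunit 0
      rw [Subsingleton.elim (u 0) 0, h.zero_left] at h1
      exact not_isUnit_zero h1
  | succ n ih =>
    intro V _ _ b h hnd s u horth hunit
    have key : ∀ (s' : ℕ) (u : Fin (s' + 1) → V),
        (∀ i j : Fin (s' + 1), i ≠ j → h.toFun (u i) (u j) = 0) →
        (∀ i : Fin (s' + 1), IsUnit (h.toFun (u i) (u i))) →
        ∃ (hs : s' + 1 ≤ n + 1) (w : Module.Basis (Fin (n + 1)) Aᵐᵒᵖ V),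
          (∀ i j : Fin (n + 1), i ≠ j → h.toFun (w i) (w j) = 0) ∧
          (∀ i : Fin (n + 1), IsUnit (h.toFun (w i) (w i))) ∧
          (∀ i : Fin (s' + 1), w (Fin.castLE hs i) = u i) := by
      clear horth hunit u
      intro s' u horth hunit
      classical
      obtain ⟨uα, huα⟩ := hunit 0
      -- the normalized linear functional ψ
      let ψ : V →ₗ[Aᵐᵒᵖ] A :=
        { toFun := fun v => (↑uα⁻¹ : A) * h.toFun (u 0) v
          map_add' := fun v w => by
            show (↑uα⁻¹ : A) * h.toFun (u 0) (v + w) = _ + _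
            rw [h.add_right, mul_add]
          map_smul' := fun r v => by
            show (↑uα⁻¹ : A) * h.toFun (u 0) (r • v) = r • ((↑uα⁻¹ : A) * h.toFun (u 0) v)
            have hh := h.smul_right (unop r) (u 0) v
            rw [op_unop] at hh
            rw [hh, MulOpposite.smul_eq_mul_unop, mul_assoc] }
      have hψ : ∀ v, ψ v = (↑uα⁻¹ : A) * h.toFun (u 0) v := fun v => rfl
      have hψu0 : ψ (u 0) = 1 := by rw [hψ, ← huα, Units.inv_mul]
      have hαψ : ∀ v, h.toFun (u 0) v = ↑uα * ψ v := fun v => by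
        rw [hψ, ← mul_assoc, Units.mul_inv, one_mul]
      -- find the pivot
      have h1 : IsUnit (∑ i : Fin (n+1), ψ (b i) * unop (b.repr (u 0) i)) := by
        have he : (1:A) = ∑ i : Fin (n+1), ψ (b i) * unop (b.repr (u 0) i) := by
          calc (1:A) = ψ (u 0) := hψu0.symm
          _ = ψ (∑ i, b.repr (u 0) i • b i) := by rw [b.sum_repr]
          _ = ∑ i, ψ (b.repr (u 0) i • b i) := map_sum ψ _ _
          _ = ∑ i, ψ (b i) * unop (b.repr (u 0) i) := by
              refine Finset.sum_congr rfl fun i _ => ?_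
              rw [map_smul, MulOpposite.smul_eq_mul_unop]
        rw [← he]; exact isUnit_one
      obtain ⟨j, -, hj⟩ := exists_unit_of_sum h1
      have hρ0 : IsUnit (b.repr (u 0) j) := by
        have h2 := (unitOfMulLeft hj).op
        rwa [op_unop] at h2
      obtain ⟨ρ, hρ⟩ := hρ0
      -- the change of basis
      let f : Fin (n+1) → V := fun i => if i = j then u 0 else b i - op (ψ (b i)) • u 0
      let F : V →ₗ[Aᵐᵒᵖ] V := Module.Basis.constr b ℕ f
      let g : Fin (n+1) → V := fun i => if i = j then
          (↑ρ⁻¹ : Aᵐᵒᵖ) • (b j - ∑ k ∈ Finset.univ.erase j,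
            b.repr (u 0) k • (b k + op (ψ (b k)) • b j))
        else b i + op (ψ (b i)) • b j
      let G : V →ₗ[Aᵐᵒᵖ] V := Module.Basis.constr b ℕ g
      have hFj : F (b j) = u 0 := by
        show (Module.Basis.constr b ℕ f) (b j) = u 0
        rw [Module.Basis.constr_basis]
        simp only [f, if_pos rfl]
      have hFi : ∀ i, i ≠ j → F (b i) = b i - op (ψ (b i)) • u 0 := fun i hij => by
        show (Module.Basis.constr b ℕ f) (b i) = _
        rw [Module.Basis.constr_basis]
        simp only [f, if_neg hij]
      have hGbj : G (b j) = (↑ρ⁻¹ : Aᵐᵒᵖ) • (b j - ∑ k ∈ Finset.univ.erase j,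
          b.repr (u 0) k • (b k + op (ψ (b k)) • b j)) := by
        show (Module.Basis.constr b ℕ g) (b j) = _
        rw [Module.Basis.constr_basis]
        simp only [g, if_pos rfl]
      have hGbk : ∀ k, k ≠ j → G (b k) = b k + op (ψ (b k)) • b j := fun k hk => by
        show (Module.Basis.constr b ℕ g) (b k) = _
        rw [Module.Basis.constr_basis]
        simp only [g, if_neg hk]
      have hsum_split : u 0 = b.repr (u 0) j • b j
          + ∑ k ∈ Finset.univ.erase j, b.repr (u 0) k • b k := by
        conv_lhs => rw [← b.sum_repr (u 0)]
        rw [← Finset.add_sum_erase _ _ (Finset.mem_univ j)]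
      have hGu0 : G (u 0) = b j := by
        have e1 : G (u 0) = b.repr (u 0) j • G (b j)
            + ∑ k ∈ Finset.univ.erase j, b.repr (u 0) k • G (b k) := by
          conv_lhs => rw [← b.sum_repr (u 0)]
          rw [map_sum]
          simp only [map_smul]
          rw [← Finset.add_sum_erase _ _ (Finset.mem_univ j)]
        have e2 : ∑ k ∈ Finset.univ.erase j, b.repr (u 0) k • G (b k)
            = ∑ k ∈ Finset.univ.erase j, b.repr (u 0) k • (b k + op (ψ (b k)) • b j) :=
          Finset.sum_congr rfl fun k hk => by rw [hGbk k (Finset.ne_of_mem_erase hk)]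
        rw [e1, e2, hGbj, ← hρ, smul_smul, Units.mul_inv, one_smul]
        abel
      have hGF : ∀ i, G (F (b i)) = b i := by
        intro i
        by_cases hij : i = j
        · subst hij; rw [hFj, hGu0]
        · rw [hFi i hij, map_sub, map_smul, hGu0, hGbk i hij]
          abel
      have hFG : ∀ i, F (G (b i)) = b i := by
        intro i
        by_cases hij : i = j
        · subst hij
          rw [hGbj, map_smul, map_sub, hFj, map_sum]
          have e3 : ∀ k ∈ Finset.univ.erase i,
              F (b.repr (u 0) k • (b k + op (ψ (b k)) • b i))
              = b.repr (u 0) k • b k := by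
            intro k hk
            rw [map_smul, map_add, map_smul, hFj, hFi k (Finset.ne_of_mem_erase hk)]
            congr 1
            abel
          rw [Finset.sum_congr rfl e3]
          have e4 : u 0 - ∑ k ∈ Finset.univ.erase i, b.repr (u 0) k • b k
              = b.repr (u 0) i • b i := sub_eq_of_eq_add hsum_split
          rw [e4, ← hρ, smul_smul, Units.inv_mul, one_smul]
        · rw [hGbk i hij, map_add, map_smul, hFj, hFi i hij]
          abel
      let e : V ≃ₗ[Aᵐᵒᵖ] V := LinearEquiv.ofLinear F G
        (b.ext fun i => by
          simp only [LinearMap.coe_comp, Function.comp_apply, LinearMap.id_coe, id_eq]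
          exact hFG i)
        (b.ext fun i => by
          simp only [LinearMap.coe_comp, Function.comp_apply, LinearMap.id_coe, id_eq]
          exact hGF i)
      let c : Module.Basis (Fin (n+1)) Aᵐᵒᵖ V := (b.map e).reindex (Equiv.swap 0 j)
      have hc : ∀ i, c i = F (b (Equiv.swap 0 j i)) := fun i => by
        show ((b.map e).reindex (Equiv.swap 0 j)) i = _
        rw [Module.Basis.reindex_apply, Equiv.symm_swap, Module.Basis.map_apply]
        rfl
      have hc0 : c 0 = u 0 := by rw [hc, Equiv.swap_apply_left, hFj]
      have hcs : ∀ i : Fin n, ψ (c i.succ) = 0 := by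
        intro i
        have hne : Equiv.swap (0 : Fin (n+1)) j i.succ ≠ j := by
          intro hEq
          have h2 := congrArg (Equiv.swap (0 : Fin (n+1)) j) hEq
          rw [Equiv.swap_apply_self, Equiv.swap_apply_right] at h2
          exact Fin.succ_ne_zero i h2
        rw [hc, hFi _ hne, map_sub, map_smul, hψu0, MulOpposite.smul_eq_mul_unop,
          unop_op, one_mul, sub_self]
      -- the orthogonal complement of u 0 and its basis
      let W := LinearMap.ker ψ
      let w0 : Fin n → W := fun i => ⟨c i.succ, LinearMap.mem_ker.mpr (hcs i)⟩
      have li : LinearIndependent Aᵐᵒᵖ w0 := by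
        have li0 : LinearIndependent Aᵐᵒᵖ (fun i : Fin n => c i.succ) :=
          c.linearIndependent.comp Fin.succ (Fin.succ_injective n)
        exact LinearIndependent.of_comp W.subtype li0
      have hspan : ⊤ ≤ Submodule.span Aᵐᵒᵖ (Set.range w0) := by
        rintro ⟨x, hx⟩ -
        have hx0 : c.repr x 0 = 0 := by
          have e5 : ψ x = unop (c.repr x 0) := by
            calc ψ x = ψ (∑ i, c.repr x i • c i) := by rw [c.sum_repr]
            _ = ∑ i, c.repr x i • ψ (c i) := by
                rw [map_sum]
                exact Finset.sum_congr rfl fun i _ => map_smul ψ _ _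
            _ = c.repr x 0 • ψ (c 0) + ∑ i : Fin n, c.repr x i.succ • ψ (c i.succ) :=
                Fin.sum_univ_succ _
            _ = unop (c.repr x 0) := by
                rw [hc0, hψu0, Finset.sum_eq_zero (fun i _ => by rw [hcs, smul_zero]),
                  add_zero, MulOpposite.smul_eq_mul_unop, one_mul]
          have h0 : unop (c.repr x 0) = 0 := by rw [← e5]; exact LinearMap.mem_ker.mp hx
          exact unop_injective (h0.trans unop_zero.symm)
        have hxsum : x = ∑ i : Fin n, c.repr x i.succ • c i.succ := by
          conv_lhs => rw [← c.sum_repr x]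
          rw [Fin.sum_univ_succ, hx0, zero_smul, zero_add]
        have e6 : (⟨x, hx⟩ : W) = ∑ i : Fin n, c.repr x i.succ • w0 i := by
          apply Subtype.ext
          have e7 := map_sum W.subtype (fun i => c.repr x i.succ • w0 i) Finset.univ
          simp only [map_smul] at e7
          show x = _
          rw [show ((∑ i : Fin n, c.repr x i.succ • w0 i : W) : V)
            = W.subtype (∑ i : Fin n, c.repr x i.succ • w0 i) from rfl, e7]
          exact hxsum
        rw [e6]
        exact Submodule.sum_mem _ fun i _ =>
          Submodule.smul_mem _ _ (Submodule.subset_span ⟨i, rfl⟩)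
      let wW : Module.Basis (Fin n) Aᵐᵒᵖ W := Module.Basis.mk li hspan
      -- the restricted hermitian form
      let h' : HermitianForm A W :=
        { toFun := fun x y => h.toFun x.1 y.1
          add_right := fun x y z => h.add_right x.1 y.1 z.1
          smul_right := fun a x y => h.smul_right a x.1 y.1
          conj_symm := fun x y => h.conj_symm x.1 y.1 }
      -- the projection onto W
      let pr : V →ₗ[Aᵐᵒᵖ] W :=
        { toFun := fun v => ⟨v - op (ψ v) • u 0, LinearMap.mem_ker.mpr (by
            rw [map_sub, map_smul, hψu0, MulOpposite.smul_eq_mul_unop, unop_op,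
              one_mul, sub_self])⟩
          map_add' := fun v w => by
            apply Subtype.ext
            show (v + w) - op (ψ (v + w)) • u 0
              = (v - op (ψ v) • u 0) + (w - op (ψ w) • u 0)
            rw [map_add, op_add, add_smul]
            abel
          map_smul' := fun r v => by
            apply Subtype.ext
            show (r • v) - op (ψ (r • v)) • u 0 = r • (v - op (ψ v) • u 0)
            rw [map_smul ψ, smul_sub]
            congr 1
            rw [MulOpposite.smul_eq_mul_unop, op_mul, op_unop, mul_smul] }
      have hpr : ∀ v, (pr v : V) = v - op (ψ v) • u 0 := fun v => rfl
      have hpru0 : pr (u 0) = 0 := by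
        apply Subtype.ext
        show u 0 - op (ψ (u 0)) • u 0 = (0 : V)
        rw [hψu0, op_one, one_smul, sub_self]
      have hprW : ∀ (x : V) (hx : x ∈ W), pr x = ⟨x, hx⟩ := fun x hx => by
        apply Subtype.ext
        show x - op (ψ x) • u 0 = x
        rw [LinearMap.mem_ker.mp hx, op_zero, zero_smul, sub_zero]
      -- non-degeneracy of the restricted form
      have hnd' : h'.Nondeg := by
        intro φ'
        obtain ⟨z, hz, huniq⟩ := hnd (φ' ∘ₗ pr)
        have hψz : ψ z = 0 := by
          rw [hψ, h.conj_symm z (u 0), hz (u 0), LinearMap.comp_apply, hpru0,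
            map_zero, star_zero, mul_zero]
        refine ⟨⟨z, LinearMap.mem_ker.mpr hψz⟩, fun y => ?_, fun y hy => ?_⟩
        · show h.toFun z y.1 = φ' y
          rw [hz y.1, LinearMap.comp_apply, hprW y.1 y.2]
        · have hyu0 : h.toFun y.1 (u 0) = 0 := by
            rw [h.conj_symm (u 0) y.1, hαψ y.1, LinearMap.mem_ker.mp y.2,
              mul_zero, star_zero]
          apply Subtype.ext
          apply huniq
          intro v
          have hv : v = op (ψ v) • u 0 + (pr v : V) := by
            rw [hpr]; abel
          conv_lhs => rw [hv]
          rw [h.add_right, h.smul_right, hyu0, zero_mul, zero_add]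
          exact hy (pr v)
      -- the given vectors lie in W
      let u' : Fin s' → W := fun i => ⟨u i.succ, LinearMap.mem_ker.mpr (by
        rw [hψ, horth 0 i.succ (Fin.succ_ne_zero i).symm, mul_zero])⟩
      obtain ⟨hs', w', hw'orth, hw'unit, hw'ext⟩ := ih wW h' hnd' s' u'
        (fun i j hij => horth i.succ j.succ (fun hEq => hij (Fin.succ_injective _ hEq)))
        (fun i => hunit i.succ)
      -- assemble the final basis
      have hli2 : ∀ (cc : Aᵐᵒᵖ), ∀ x ∈ W, cc • u 0 + x = 0 → cc = 0 := by
        intro cc x hx hEq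
        have h2 := congrArg ψ hEq
        rw [map_add, map_smul, hψu0, LinearMap.mem_ker.mp hx, map_zero, add_zero,
          MulOpposite.smul_eq_mul_unop, one_mul] at h2
        exact unop_injective (h2.trans unop_zero.symm)
      have hsp2 : ∀ z : V, ∃ cc : Aᵐᵒᵖ, z + cc • u 0 ∈ W := fun z =>
        ⟨-op (ψ z), by
          rw [LinearMap.mem_ker, map_add, map_smul, hψu0,
            MulOpposite.smul_eq_mul_unop, one_mul, unop_neg, unop_op, add_neg_cancel]⟩
      let wB : Module.Basis (Fin (n+1)) Aᵐᵒᵖ V := Module.Basis.mkFinCons (u 0) w' hli2 hsp2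
      have hwB : ⇑wB = Fin.cons (u 0) (W.subtype ∘ w') :=
        Module.Basis.coe_mkFinCons (u 0) w' hli2 hsp2
      have hwB0 : wB 0 = u 0 := by rw [hwB]; rfl
      have hwBs : ∀ i : Fin n, wB i.succ = (w' i : V) := fun i => by
        rw [hwB, Fin.cons_succ]; rfl
      have horthW : ∀ x : W, h.toFun (u 0) x.1 = 0 := fun x => by
        rw [hαψ x.1, LinearMap.mem_ker.mp x.2, mul_zero]
      have horthW2 : ∀ x : W, h.toFun x.1 (u 0) = 0 := fun x => by
        rw [h.conj_symm (u 0) x.1, horthW x, star_zero]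
      refine ⟨Nat.succ_le_succ hs', wB, ?_, ?_, ?_⟩
      · intro i k hik
        rcases Fin.eq_zero_or_eq_succ i with rfl | ⟨i', rfl⟩
        · rcases Fin.eq_zero_or_eq_succ k with rfl | ⟨k', rfl⟩
          · exact absurd rfl hik
          · rw [hwB0, hwBs]; exact horthW (w' k')
        · rcases Fin.eq_zero_or_eq_succ k with rfl | ⟨k', rfl⟩
          · rw [hwB0, hwBs]; exact horthW2 (w' i')
          · rw [hwBs, hwBs]
            exact hw'orth i' k' (fun hEq => hik (congrArg Fin.succ hEq))
      · intro i
        rcases Fin.eq_zero_or_eq_succ i with rfl | ⟨i', rfl⟩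
        · rw [hwB0]; exact ⟨uα, huα⟩
        · rw [hwBs]; exact hw'unit i'
      · intro i
        rcases Fin.eq_zero_or_eq_succ i with rfl | ⟨i', rfl⟩
        · rw [show Fin.castLE (Nat.succ_le_succ hs') (0 : Fin (s'+1)) = 0 from rfl, hwB0]
        · rw [show Fin.castLE (Nat.succ_le_succ hs') i'.succ
            = (Fin.castLE hs' i').succ from rfl, hwBs, hw'ext i']

    rcases s with _ | s'
    · have hex : ∃ z : V, IsUnit (h.toFun z z) := by
        let φ0 : V →ₗ[Aᵐᵒᵖ] A :=
          { toFun := fun v => unop (b.repr v 0)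
            map_add' := fun v w => by
              show unop (b.repr (v + w) 0) = unop (b.repr v 0) + unop (b.repr w 0)
              rw [map_add]; rfl
            map_smul' := fun r v => by
              show unop (b.repr (r • v) 0) = r • unop (b.repr v 0)
              rw [map_smul, Finsupp.smul_apply, smul_eq_mul, unop_mul,
                MulOpposite.smul_eq_mul_unop] }
        obtain ⟨x, hx, -⟩ := hnd φ0
        have hxy : h.toFun x (b 0) = 1 := by
          rw [hx (b 0)]
          show unop (b.repr (b 0) 0) = 1
          rw [Module.Basis.repr_self, Finsupp.single_eq_same, unop_one]
        by_cases h1 : IsUnit (h.toFun x x)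
        · exact ⟨x, h1⟩
        by_cases h2 : IsUnit (h.toFun (b 0) (b 0))
        · exact ⟨b 0, h2⟩
        refine ⟨x + op d • b 0, ?_⟩
        have hyx : h.toFun (b 0) x = 1 := by rw [h.conj_symm x (b 0), hxy, star_one]
        have hcalc : h.toFun (x + op d • b 0) (x + op d • b 0)
            = h.toFun x x + star d * h.toFun (b 0) (b 0) * d + 1 := by
          simp only [h.add_right, h.add_left, h.smul_left, h.smul_right]
          rw [hxy, hyx, mul_one, one_mul, ← hd]
          simp only [mul_assoc]
          abel
        rw [hcalc]
        apply unit_add_one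
        intro hu
        rcases myUnitAdd hu with h3 | h3
        · exact h1 h3
        · exact h2 (unitOfMulLeft (unitOfMulRight h3))
      rcases hex with ⟨z, hz⟩
      rcases key 0 (fun _ => z)
        (fun i j hij => absurd (Fin.ext (by have := i.isLt; have := j.isLt; omega)) hij)
        (fun _ => hz) with ⟨hs1, w, hw1, hw2, _⟩
      exact ⟨Nat.zero_le _, w, hw1, hw2, fun i => i.elim0⟩
    · exact key s' u horth hunit

/-- Lemma 2.3(a): pairwise orthogonal vectors with unit lengths extend to an
orthogonal basis of `V` all of whose lengths are units. -/
theorem stmt_2 {A V : Type*} [Ring A] [StarRing A] [IsLocalRing A]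
    [AddCommGroup V] [Module Aᵐᵒᵖ V]
    (hcent : ∀ a : A, star a = a → a ∈ Set.center A)
    (d : A) (hd : d + star d = 1)
    (m : ℕ) (hm : 1 ≤ m) (b : Module.Basis (Fin m) Aᵐᵒᵖ V)
    (h : HermitianForm A V) (hnd : h.Nondeg)
    (s : ℕ) (u : Fin s → V)
    (horth : ∀ i j : Fin s, i ≠ j → h.toFun (u i) (u j) = 0)
    (hunit : ∀ i : Fin s, IsUnit (h.toFun (u i) (u i))) :
    ∃ (hs : s ≤ m) (w : Module.Basis (Fin m) Aᵐᵒᵖ V),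
      (∀ i j : Fin m, i ≠ j → h.toFun (w i) (w j) = 0) ∧
      (∀ i : Fin m, IsUnit (h.toFun (w i) (w i))) ∧
      (∀ i : Fin s, w (Fin.castLE hs i) = u i) := by
  exact main_extension d hd m b h hnd s u horth hunit
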